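/- Let u : ℝ → ℝ be strictly concave and nondecreasing, and let ξ be a random variable supported on a compact interval [ξ_min, ξ_max]. If x* maximizes x ↦ u(x) + E[u(ξ - x)] over ℝ, then x* ∈ [ξ_min/2, ξ_max/2]. Consequently M_u(ξ) = sup_{x ∈ [ξ_min/2, ξ_max/2]} { u(x) + E[u(ξ - x)] }. -/

import Mathlib

open MeasureTheory

private lemma concave_shift {u : ℝ → ℝ} (hc : ConcaveOn ℝ Set.univ u)
    {s s0 δ : ℝ} (h : s ≤ s0) (hδ : 0 ≤ δ) :
    u (s0 + δ) - u s0 ≤ u (s + δ) - u s := by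
  rcases eq_or_lt_of_le h with rfl | h
  · simp
  rcases eq_or_lt_of_le hδ with rfl | hδ
  · simp
  have hL0 : (0:ℝ) < s0 + δ - s := by linarith
  set lam : ℝ := δ / (s0 + δ - s) with hlam
  have h1 : 0 < lam := div_pos hδ hL0
  have h2 : 0 < 1 - lam := by
    have : lam < 1 := by rw [hlam, div_lt_one hL0]; linarith
    linarith
  have e1 : (1 - lam) • s + lam • (s0 + δ) = s + δ := by
    simp only [smul_eq_mul, hlam]
    field_simp
    ring
  have e2 : lam • s + (1 - lam) • (s0 + δ) = s0 := by
    simp only [smul_eq_mul, hlam]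
    field_simp
    ring
  have i1 := hc.2 (Set.mem_univ s) (Set.mem_univ (s0 + δ)) h2.le h1.le (by ring)
  have i2 := hc.2 (Set.mem_univ s) (Set.mem_univ (s0 + δ)) h1.le h2.le (by ring)
  rw [e1] at i1
  rw [e2] at i2
  simp only [smul_eq_mul] at i1 i2
  linarith

theorem stmt8 {Ω : Type*} [MeasurableSpace Ω] (μ : Measure Ω) [IsProbabilityMeasure μ]
    (u : ℝ → ℝ) (hconc : StrictConcaveOn ℝ Set.univ u) (hmono : Monotone u)
    (ξ : Ω → ℝ) (ξmin ξmax : ℝ) (hsupp : ∀ ω, ξ ω ∈ Set.Icc ξmin ξmax)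
    (hint : ∀ x : ℝ, Integrable (fun ω => u (ξ ω - x)) μ)
    (xstar : ℝ)
    (hmax : ∀ x : ℝ, u x + ∫ ω, u (ξ ω - x) ∂μ ≤ u xstar + ∫ ω, u (ξ ω - xstar) ∂μ) :
    xstar ∈ Set.Icc (ξmin / 2) (ξmax / 2) ∧
      sSup {y : ℝ | ∃ x : ℝ, y = u x + ∫ ω, u (ξ ω - x) ∂μ} =
        sSup {y : ℝ | ∃ x ∈ Set.Icc (ξmin / 2) (ξmax / 2),
          y = u x + ∫ ω, u (ξ ω - x) ∂μ} := by
  have hconcOn := hconc.concaveOn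
  -- Key step: if for some m the pointwise shift bound holds and xstar ≠ 2m - xstar,
  -- then m strictly beats xstar, contradicting optimality.
  have key : ∀ m : ℝ, xstar ≠ 2*m - xstar →
      (∀ ω, u (ξ ω - xstar) - u (ξ ω - m) ≤ u (2*m - xstar) - u m) → False := by
    intro m hne hpt
    have hmid : u xstar + u (2*m - xstar) < 2 * u m := by
      have h := hconc.2 (Set.mem_univ xstar) (Set.mem_univ (2*m - xstar)) hne
        one_half_pos one_half_pos (by norm_num)
      have e : (1/2 : ℝ) • xstar + (1/2 : ℝ) • (2*m - xstar) = m := by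
        simp only [smul_eq_mul]; ring
      rw [e] at h
      simp only [smul_eq_mul] at h
      linarith
    have hmono' : ∫ ω, (u (ξ ω - xstar) + (u m - u (2*m - xstar))) ∂μ
        ≤ ∫ ω, u (ξ ω - m) ∂μ :=
      integral_mono ((hint xstar).add (integrable_const _)) (hint m)
        (fun ω => by have := hpt ω; linarith)
    rw [integral_add (hint xstar) (integrable_const _), integral_const] at hmono'
    simp only [probReal_univ, one_smul] at hmono'
    have := hmax m
    linarith
  have hmem : xstar ∈ Set.Icc (ξmin / 2) (ξmax / 2) := by
    by_contra hx
    rw [Set.mem_Icc] at hx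
    push_neg at hx
    rcases lt_or_ge xstar (ξmin/2) with h1 | h1
    · refine key (ξmin/2) (by intro hEq; rw [hEq] at h1; linarith) ?_
      intro ω
      have hω := hsupp ω
      have h := concave_shift hconcOn (s := ξmin/2) (s0 := ξ ω - ξmin/2)
        (δ := ξmin/2 - xstar) (by have := hω.1; linarith) (by linarith)
      have e1 : ξ ω - ξmin/2 + (ξmin/2 - xstar) = ξ ω - xstar := by ring
      have e2 : ξmin/2 + (ξmin/2 - xstar) = 2*(ξmin/2) - xstar := by ring
      rw [e1, e2] at h
      linarith
    · have h2 : ξmax/2 < xstar := hx h1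
      refine key (ξmax/2) (by intro hEq; rw [hEq] at h2; linarith) ?_
      intro ω
      have hω := hsupp ω
      have h := concave_shift hconcOn (s := ξ ω - xstar) (s0 := 2*(ξmax/2) - xstar)
        (δ := xstar - ξmax/2) (by have := hω.2; linarith) (by linarith)
      have e1 : ξ ω - xstar + (xstar - ξmax/2) = ξ ω - ξmax/2 := by ring
      have e2 : 2*(ξmax/2) - xstar + (xstar - ξmax/2) = ξmax/2 := by ring
      rw [e1, e2] at h
      linarith
  refine ⟨hmem, ?_⟩
  have hGA : IsGreatest {y : ℝ | ∃ x : ℝ, y = u x + ∫ ω, u (ξ ω - x) ∂μ}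
      (u xstar + ∫ ω, u (ξ ω - xstar) ∂μ) :=
    ⟨⟨xstar, rfl⟩, by rintro y ⟨x, rfl⟩; exact hmax x⟩
  have hGB : IsGreatest {y : ℝ | ∃ x ∈ Set.Icc (ξmin / 2) (ξmax / 2),
      y = u x + ∫ ω, u (ξ ω - x) ∂μ} (u xstar + ∫ ω, u (ξ ω - xstar) ∂μ) :=
    ⟨⟨xstar, hmem, rfl⟩, by rintro y ⟨x, _, rfl⟩; exact hmax x⟩
  rw [hGA.csSup_eq, hGB.csSup_eq]
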